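/- Novikov algebras satisfy the Dong property: if A is a Novikov algebra over a field k of characteristic 0 with product μ, and a, b, c are pairwise mutually μ-local formal distributions over A, then for every n ∈ ℕ both ordered pairs (a ∘_{μ,n} b, c) and (c, a ∘_{μ,n} b) are μ-local. -/

import Mathlib

/-!
Novikov algebras satisfy the Dong property.
-/

/-- The ordered pair of formal distributions `(a, b)` over `A` is `μ`-local:
there is `N` with `(w - z)^N μ(a(w), b(z)) = 0`, encoded coefficient-wise. -/
def IsLocalPair {A : Type*} [AddCommGroup A] (μ : A → A → A) (a b : ℤ → A) : Prop :=
  ∃ N : ℕ, ∀ m p : ℤ,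
    ∑ s ∈ Finset.range (N + 1),
      ((-1 : ℤ) ^ s * (N.choose s : ℤ)) • μ (a (m + (N : ℤ) - (s : ℤ))) (b (p + (s : ℤ))) = 0

/-- The `n`-th `μ`-product `a ∘_{μ,n} b` of formal distributions,
encoding `Res_{ξ=0} (ξ - w)^n μ(a(ξ), b(w))`. -/
def NthProduct {A : Type*} [AddCommGroup A] (μ : A → A → A) (n : ℕ) (a b : ℤ → A) : ℤ → A :=
  fun m => ∑ j ∈ Finset.range (n + 1),
    ((-1 : ℤ) ^ j * (n.choose j : ℤ)) • μ (a ((n : ℤ) - (j : ℤ))) (b (m + (j : ℤ)))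

/-- Three formal distributions `a, b, c` are pairwise mutually `μ`-local. -/
def PairwiseMutuallyLocal {A : Type*} [AddCommGroup A] (μ : A → A → A) (a b c : ℤ → A) : Prop :=
  IsLocalPair μ a b ∧ IsLocalPair μ b a ∧ IsLocalPair μ a c ∧ IsLocalPair μ c a ∧
    IsLocalPair μ b c ∧ IsLocalPair μ c b

/-- `μ : A → A → A` is `k`-bilinear. -/
def IsBilinear (k : Type*) [Field k] {A : Type*} [AddCommGroup A] [Module k A]
    (μ : A → A → A) : Prop :=
  (∀ x y z : A, μ (x + y) z = μ x z + μ y z) ∧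
    (∀ x y z : A, μ x (y + z) = μ x y + μ x z) ∧
    (∀ (r : k) (x y : A), μ (r • x) y = r • μ x y) ∧
    (∀ (r : k) (x y : A), μ x (r • y) = r • μ x y)

namespace NovikovDongAux

open Finset

/-- Binomial expansion of `(x - y)^M` for commuting elements, with integer smul coefficients. -/
lemma commute_sub_pow {R : Type*} [Ring R] {x y : R} (h : Commute x y) (M : ℕ) :
    (x - y) ^ M = ∑ s ∈ Finset.range (M + 1),
      ((-1 : ℤ) ^ s * (M.choose s : ℤ)) • (x ^ (M - s) * y ^ s) := by
  rw [sub_eq_add_neg, (h.neg_right).add_pow, ← Finset.sum_range_reflect]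
  refine Finset.sum_congr rfl fun s hs => ?_
  have hs' : s ≤ M := by
    have := Finset.mem_range.mp hs; omega
  have h1 : M + 1 - 1 - s = M - s := by omega
  rw [h1, Nat.sub_sub_self hs', Nat.choose_symm hs', neg_pow, zsmul_eq_mul]
  push_cast
  have c1 : Commute ((-1 : R) ^ s) (x ^ (M - s)) :=
    ((Commute.neg_one_left x).pow_pow s (M - s))
  rw [← mul_assoc (x ^ (M - s)), ← c1.eq, mul_assoc, mul_assoc, ← (Nat.cast_commute (M.choose s) (y ^ s)).eq,
    ← mul_assoc (x ^ (M - s)), ← (Nat.cast_commute (M.choose s) (x ^ (M - s))).eq,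
    mul_assoc ((M.choose s : R)), ← mul_assoc]

variable {A : Type*} [AddCommGroup A]

/-- Translation endomorphism of three-variable families. -/
def S (q : ℤ × ℤ × ℤ) : AddMonoid.End (ℤ → ℤ → ℤ → A) :=
  AddMonoidHom.mk' (fun u l m p => u (l + q.1) (m + q.2.1) (p + q.2.2)) (fun _ _ => rfl)

@[simp] lemma S_apply (q : ℤ × ℤ × ℤ) (u : ℤ → ℤ → ℤ → A) (l m p : ℤ) :
    S q u l m p = u (l + q.1) (m + q.2.1) (p + q.2.2) := rfl

lemma S_comm (q r : ℤ × ℤ × ℤ) : Commute (S q (A := A)) (S r) := by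
  show _ = _
  apply AddMonoidHom.ext; intro u
  funext l m p
  show u _ _ _ = u _ _ _
  rw [show l + r.1 + q.1 = l + q.1 + r.1 by ring, show m + r.2.1 + q.2.1 = m + q.2.1 + r.2.1 by ring,
    show p + r.2.2 + q.2.2 = p + q.2.2 + r.2.2 by ring]

lemma S_pow_apply (q : ℤ × ℤ × ℤ) (k : ℕ) (u : ℤ → ℤ → ℤ → A) (l m p : ℤ) :
    ((S q ^ k) u) l m p = u (l + k * q.1) (m + k * q.2.1) (p + k * q.2.2) := by
  induction k generalizing u l m p with
  | zero => simp
  | succ k ih =>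
    rw [pow_succ]
    show ((S q ^ k) (S q u)) l m p = _
    rw [ih]
    show u _ _ _ = u _ _ _
    rw [show l + ↑k * q.1 + q.1 = l + ↑(k+1) * q.1 by push_cast; ring,
      show m + ↑k * q.2.1 + q.2.1 = m + ↑(k+1) * q.2.1 by push_cast; ring,
      show p + ↑k * q.2.2 + q.2.2 = p + ↑(k+1) * q.2.2 by push_cast; ring]


lemma End_smul_apply {M : Type*} [AddCommGroup M] (z : ℤ) (f : AddMonoid.End M) (b : M) :
    (z • f) b = z • f b := rfl

lemma End_sum_apply {M ι : Type*} [AddCommGroup M] (f : ι → AddMonoid.End M) (s : Finset ι)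
    (b : M) : (∑ x ∈ s, f x) b = ∑ x ∈ s, f x b := by
  induction s using Finset.cons_induction with
  | empty => rfl
  | cons a s h ih => rw [Finset.sum_cons, Finset.sum_cons, ← ih]; rfl

lemma sub_pow_apply (q r : ℤ × ℤ × ℤ) (M : ℕ) (u : ℤ → ℤ → ℤ → A) (l m p : ℤ) :
    (((S q - S r : AddMonoid.End (ℤ → ℤ → ℤ → A)) ^ M) u) l m p = ∑ s ∈ Finset.range (M + 1),
      ((-1 : ℤ) ^ s * (M.choose s : ℤ)) •
        u (l + ((M - s : ℕ) : ℤ) * q.1 + (s : ℤ) * r.1)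
          (m + ((M - s : ℕ) : ℤ) * q.2.1 + (s : ℤ) * r.2.1)
          (p + ((M - s : ℕ) : ℤ) * q.2.2 + (s : ℤ) * r.2.2) := by
  rw [commute_sub_pow (S_comm q r) M, End_sum_apply]
  rw [Finset.sum_apply, Finset.sum_apply, Finset.sum_apply]
  refine Finset.sum_congr rfl fun s hs => ?_
  rw [End_smul_apply]
  have : ((S q ^ (M - s) * S r ^ s : AddMonoid.End (ℤ → ℤ → ℤ → A)) u) l m p =
      u (l + ((M - s : ℕ) : ℤ) * q.1 + (s : ℤ) * r.1)
        (m + ((M - s : ℕ) : ℤ) * q.2.1 + (s : ℤ) * r.2.1)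
        (p + ((M - s : ℕ) : ℤ) * q.2.2 + (s : ℤ) * r.2.2) := by
    show ((S q ^ (M - s)) ((S r ^ s) u)) l m p = _
    rw [S_pow_apply, S_pow_apply]
  rw [← this]
  rfl

lemma pow_apply_zero_of_le {M : Type*} [AddCommGroup M] {e : AddMonoid.End M} {u : M} {N K : ℕ}
    (h : (e ^ N) u = 0) (hNK : N ≤ K) : (e ^ K) u = 0 := by
  obtain ⟨d, rfl⟩ : ∃ d, K = d + N := ⟨K - N, by omega⟩
  rw [pow_add]
  show (e ^ d) ((e ^ N) u) = 0
  rw [h]; exact map_zero _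

lemma mul_pow_apply_zero {M : Type*} [AddCommGroup M] {x y : AddMonoid.End M} (h : Commute x y)
    {u : M} {N a b : ℕ} (hx : (x ^ N) u = 0) (hy : (y ^ N) u = 0) (hab : N ≤ a ∨ N ≤ b) :
    (x ^ a * y ^ b) u = 0 := by
  rcases hab with hab | hab
  · rw [(h.pow_pow a b).eq]
    show (y ^ b) ((x ^ a) u) = 0
    rw [pow_apply_zero_of_le hx hab]; exact map_zero _
  · show (x ^ a) ((y ^ b) u) = 0
    rw [pow_apply_zero_of_le hy hab]; exact map_zero _

/-- If `x^N u = 0` then `(x^(2N) * w^n) u = 0` for commuting `w`. -/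
lemma compB {M : Type*} [AddCommGroup M] {x w : AddMonoid.End M} (h : Commute x w)
    {u : M} {N n : ℕ} (hx : (x ^ N) u = 0) : (x ^ (2*N) * w ^ n) u = 0 := by
  rw [(h.pow_pow (2*N) n).eq]
  show (w ^ n) ((x ^ (2*N)) u) = 0
  rw [pow_apply_zero_of_le hx (by omega)]; exact map_zero _

/-- If `x^N u = 0` and `y^N u = 0` then `((y-x)^(2N) * x^n) u = 0` for commuting `x y`. -/
lemma compA {M : Type*} [AddCommGroup M] {x y : AddMonoid.End M} (h : Commute x y)
    {u : M} {N n : ℕ} (hx : (x ^ N) u = 0) (hy : (y ^ N) u = 0) :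
    ((y - x) ^ (2*N) * x ^ n) u = 0 := by
  rw [commute_sub_pow h.symm (2*N), Finset.sum_mul, End_sum_apply]
  refine Finset.sum_eq_zero fun s hs => ?_
  have hs' : s ≤ 2*N := by have := Finset.mem_range.mp hs; omega
  rw [smul_mul_assoc, mul_assoc, ← pow_add, End_smul_apply,
    mul_pow_apply_zero h.symm hy hx (by omega), smul_zero]

/-- If `(x-y)^N u = 0` and `y^N u = 0` then `(x^(2N) * (x-y)^n) u = 0` for commuting `x y`. -/
lemma compC {M : Type*} [AddCommGroup M] {x y : AddMonoid.End M} (h : Commute x y)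
    {u : M} {N n : ℕ} (hxy : ((x - y) ^ N) u = 0) (hy : (y ^ N) u = 0) :
    (x ^ (2*N) * (x - y) ^ n) u = 0 := by
  have hc : Commute (x - y) y := h.sub_left (Commute.refl y)
  have key : x ^ (2*N) = ∑ s ∈ Finset.range (2*N+1),
      ((-1:ℤ)^s * ((2*N).choose s : ℤ)) • ((x-y)^(2*N-s) * (-y)^s) := by
    have h2 := commute_sub_pow (x := x - y) (y := -y) (hc.neg_right) (2*N)
    rw [sub_neg_eq_add, sub_add_cancel] at h2
    exact h2
  rw [key, Finset.sum_mul, End_sum_apply]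
  refine Finset.sum_eq_zero fun s hs => ?_
  have hs' : s ≤ 2*N := by have := Finset.mem_range.mp hs; omega
  have hny : ((-y) ^ N) u = 0 := by
    rw [neg_pow]
    show ((-1 : AddMonoid.End M) ^ N) ((y ^ N) u) = 0
    rw [hy]; exact map_zero _
  rw [smul_mul_assoc, End_smul_apply, mul_assoc,
    (hc.neg_right.symm.pow_pow s n).eq, ← mul_assoc, ← pow_add,
    mul_pow_apply_zero hc.neg_right hxy hny (by omega), smul_zero]


lemma d12_pow_apply (M : ℕ) (u : ℤ → ℤ → ℤ → A) (l m p : ℤ) :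
    (((S (1,0,0) - S (0,1,0) : AddMonoid.End (ℤ → ℤ → ℤ → A)) ^ M) u) l m p =
      ∑ s ∈ Finset.range (M + 1), ((-1:ℤ)^s * (M.choose s : ℤ)) • u (l + (M:ℤ) - (s:ℤ)) (m + (s:ℤ)) p := by
  rw [sub_pow_apply]
  refine Finset.sum_congr rfl fun s hs => ?_
  have hs' : s ≤ M := by have := Finset.mem_range.mp hs; omega
  have e1 : l + ((M - s : ℕ) : ℤ) * ((1,0,0) : ℤ × ℤ × ℤ).1 + (s:ℤ) * ((0,1,0) : ℤ × ℤ × ℤ).1 = (l + (M:ℤ) - (s:ℤ)) := by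
    simp; try omega
  have e2 : m + ((M - s : ℕ) : ℤ) * ((1,0,0) : ℤ × ℤ × ℤ).2.1 + (s:ℤ) * ((0,1,0) : ℤ × ℤ × ℤ).2.1 = (m + (s:ℤ)) := by
    simp; try omega
  have e3 : p + ((M - s : ℕ) : ℤ) * ((1,0,0) : ℤ × ℤ × ℤ).2.2 + (s:ℤ) * ((0,1,0) : ℤ × ℤ × ℤ).2.2 = p := by
    simp; try omega
  rw [e1, e2, e3]


lemma d13_pow_apply (M : ℕ) (u : ℤ → ℤ → ℤ → A) (l m p : ℤ) :
    (((S (1,0,0) - S (0,0,1) : AddMonoid.End (ℤ → ℤ → ℤ → A)) ^ M) u) l m p =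
      ∑ s ∈ Finset.range (M + 1), ((-1:ℤ)^s * (M.choose s : ℤ)) • u (l + (M:ℤ) - (s:ℤ)) m (p + (s:ℤ)) := by
  rw [sub_pow_apply]
  refine Finset.sum_congr rfl fun s hs => ?_
  have hs' : s ≤ M := by have := Finset.mem_range.mp hs; omega
  have e1 : l + ((M - s : ℕ) : ℤ) * ((1,0,0) : ℤ × ℤ × ℤ).1 + (s:ℤ) * ((0,0,1) : ℤ × ℤ × ℤ).1 = (l + (M:ℤ) - (s:ℤ)) := by
    simp; try omega
  have e2 : m + ((M - s : ℕ) : ℤ) * ((1,0,0) : ℤ × ℤ × ℤ).2.1 + (s:ℤ) * ((0,0,1) : ℤ × ℤ × ℤ).2.1 = m := by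
    simp; try omega
  have e3 : p + ((M - s : ℕ) : ℤ) * ((1,0,0) : ℤ × ℤ × ℤ).2.2 + (s:ℤ) * ((0,0,1) : ℤ × ℤ × ℤ).2.2 = (p + (s:ℤ)) := by
    simp; try omega
  rw [e1, e2, e3]


lemma d23_pow_apply (M : ℕ) (u : ℤ → ℤ → ℤ → A) (l m p : ℤ) :
    (((S (0,1,0) - S (0,0,1) : AddMonoid.End (ℤ → ℤ → ℤ → A)) ^ M) u) l m p =
      ∑ s ∈ Finset.range (M + 1), ((-1:ℤ)^s * (M.choose s : ℤ)) • u l (m + (M:ℤ) - (s:ℤ)) (p + (s:ℤ)) := by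
  rw [sub_pow_apply]
  refine Finset.sum_congr rfl fun s hs => ?_
  have hs' : s ≤ M := by have := Finset.mem_range.mp hs; omega
  have e1 : l + ((M - s : ℕ) : ℤ) * ((0,1,0) : ℤ × ℤ × ℤ).1 + (s:ℤ) * ((0,0,1) : ℤ × ℤ × ℤ).1 = l := by
    simp; try omega
  have e2 : m + ((M - s : ℕ) : ℤ) * ((0,1,0) : ℤ × ℤ × ℤ).2.1 + (s:ℤ) * ((0,0,1) : ℤ × ℤ × ℤ).2.1 = (m + (M:ℤ) - (s:ℤ)) := by
    simp; try omega
  have e3 : p + ((M - s : ℕ) : ℤ) * ((0,1,0) : ℤ × ℤ × ℤ).2.2 + (s:ℤ) * ((0,0,1) : ℤ × ℤ × ℤ).2.2 = (p + (s:ℤ)) := by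
    simp; try omega
  rw [e1, e2, e3]


lemma e32_pow_apply (M : ℕ) (u : ℤ → ℤ → ℤ → A) (l m p : ℤ) :
    (((S (0,0,1) - S (0,1,0) : AddMonoid.End (ℤ → ℤ → ℤ → A)) ^ M) u) l m p =
      ∑ s ∈ Finset.range (M + 1), ((-1:ℤ)^s * (M.choose s : ℤ)) • u l (m + (s:ℤ)) (p + (M:ℤ) - (s:ℤ)) := by
  rw [sub_pow_apply]
  refine Finset.sum_congr rfl fun s hs => ?_
  have hs' : s ≤ M := by have := Finset.mem_range.mp hs; omega
  have e1 : l + ((M - s : ℕ) : ℤ) * ((0,0,1) : ℤ × ℤ × ℤ).1 + (s:ℤ) * ((0,1,0) : ℤ × ℤ × ℤ).1 = l := by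
    simp; try omega
  have e2 : m + ((M - s : ℕ) : ℤ) * ((0,0,1) : ℤ × ℤ × ℤ).2.1 + (s:ℤ) * ((0,1,0) : ℤ × ℤ × ℤ).2.1 = (m + (s:ℤ)) := by
    simp; try omega
  have e3 : p + ((M - s : ℕ) : ℤ) * ((0,0,1) : ℤ × ℤ × ℤ).2.2 + (s:ℤ) * ((0,1,0) : ℤ × ℤ × ℤ).2.2 = (p + (M:ℤ) - (s:ℤ)) := by
    simp; try omega
  rw [e1, e2, e3]

lemma neg_pow_apply_zero {M : Type*} [AddCommGroup M] {e : AddMonoid.End M} {u : M} {N : ℕ}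
    (h : (e ^ N) u = 0) : ((-e) ^ N) u = 0 := by
  rw [neg_pow]
  show ((-1 : AddMonoid.End M) ^ N) ((e ^ N) u) = 0
  rw [h]; exact map_zero _

lemma Dsub_comm (q r q' r' : ℤ × ℤ × ℤ) :
    Commute (S q - S r : AddMonoid.End (ℤ → ℤ → ℤ → A)) (S q' - S r') :=
  ((S_comm q q').sub_right (S_comm q r')).sub_left ((S_comm r q').sub_right (S_comm r r'))

lemma mul_left_zero {A : Type*} [AddCommGroup A] {μ : A → A → A}
    (hadd : ∀ x y z : A, μ (x + y) z = μ x z + μ y z) (t : A) : μ 0 t = 0 := by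
  have h := hadd 0 0 t
  rw [zero_add] at h
  exact (right_eq_add.mp h)

lemma mul_right_zero {A : Type*} [AddCommGroup A] {μ : A → A → A}
    (hadd : ∀ x y z : A, μ x (y + z) = μ x y + μ x z) (t : A) : μ t 0 = 0 := by
  have h := hadd t 0 0
  rw [zero_add] at h
  exact (right_eq_add.mp h)

lemma pullL {A : Type*} [AddCommGroup A] {μ : A → A → A}
    (hadd : ∀ x y z : A, μ (x + y) z = μ x z + μ y z)
    (t : A) (F : Finset ℕ) (z : ℕ → ℤ) (x : ℕ → A) :
    ∑ i ∈ F, z i • μ (x i) t = μ (∑ i ∈ F, z i • x i) t := by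
  let f : A →+ A := AddMonoidHom.mk' (fun v => μ v t) (fun v w => hadd v w t)
  calc ∑ i ∈ F, z i • μ (x i) t = ∑ i ∈ F, f (z i • x i) := by
        refine Finset.sum_congr rfl fun i _ => ?_
        rw [map_zsmul]; rfl
    _ = f (∑ i ∈ F, z i • x i) := (map_sum f _ F).symm
    _ = μ (∑ i ∈ F, z i • x i) t := rfl

lemma pullR {A : Type*} [AddCommGroup A] {μ : A → A → A}
    (hadd : ∀ x y z : A, μ x (y + z) = μ x y + μ x z)
    (t : A) (F : Finset ℕ) (z : ℕ → ℤ) (x : ℕ → A) :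
    ∑ i ∈ F, z i • μ t (x i) = μ t (∑ i ∈ F, z i • x i) := by
  let f : A →+ A := AddMonoidHom.mk' (fun v => μ t v) (fun v w => hadd t v w)
  calc ∑ i ∈ F, z i • μ t (x i) = ∑ i ∈ F, f (z i • x i) := by
        refine Finset.sum_congr rfl fun i _ => ?_
        rw [map_zsmul]; rfl
    _ = f (∑ i ∈ F, z i • x i) := (map_sum f _ F).symm
    _ = μ t (∑ i ∈ F, z i • x i) := rfl

theorem main_aux {A : Type*} [AddCommGroup A] (μ : A → A → A)
    (hadd1 : ∀ x y z : A, μ (x + y) z = μ x z + μ y z)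
    (hadd2 : ∀ x y z : A, μ x (y + z) = μ x y + μ x z)
    (hlsym : ∀ x y z : A, μ (μ x y) z - μ x (μ y z) = μ (μ y x) z - μ y (μ x z))
    (hrcom : ∀ x y z : A, μ (μ x y) z = μ (μ x z) y)
    (a b c : ℤ → A) (Nab Nac Ncb : ℕ)
    (hab : ∀ m p : ℤ, ∑ s ∈ Finset.range (Nab + 1),
      ((-1 : ℤ) ^ s * ((Nab).choose s : ℤ)) • μ (a (m + (Nab : ℤ) - (s : ℤ))) (b (p + (s : ℤ))) = 0)
    (hac : ∀ m p : ℤ, ∑ s ∈ Finset.range (Nac + 1),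
      ((-1 : ℤ) ^ s * ((Nac).choose s : ℤ)) • μ (a (m + (Nac : ℤ) - (s : ℤ))) (c (p + (s : ℤ))) = 0)
    (hcb : ∀ m p : ℤ, ∑ s ∈ Finset.range (Ncb + 1),
      ((-1 : ℤ) ^ s * ((Ncb).choose s : ℤ)) • μ (c (m + (Ncb : ℤ) - (s : ℤ))) (b (p + (s : ℤ))) = 0)
    (n : ℕ) :
    IsLocalPair μ (NthProduct μ n a b) c ∧ IsLocalPair μ c (NthProduct μ n a b) := by
  set N := max Nab (max Nac Ncb) with hN
  have hNab : Nab ≤ N := le_max_left _ _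
  have hNac : Nac ≤ N := le_trans (le_max_left _ _) (le_max_right _ _)
  have hNcb : Ncb ≤ N := le_trans (le_max_right _ _) (le_max_right _ _)
  -- operator facts for g
  have hg12 : (((S (1,0,0) - S (0,1,0) : AddMonoid.End (ℤ → ℤ → ℤ → A))) ^ N) (fun l m p => μ (μ (a l) (b m)) (c p)) = 0 := by
    refine pow_apply_zero_of_le ?_ hNab
    funext l m p
    show (((S (1,0,0) - S (0,1,0) : AddMonoid.End (ℤ → ℤ → ℤ → A))) ^ Nab) (fun l m p => μ (μ (a l) (b m)) (c p)) l m p = (0 : A)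
    rw [d12_pow_apply]
    calc ∑ s ∈ Finset.range (Nab + 1), ((-1 : ℤ) ^ s * ((Nab).choose s : ℤ)) •
            (fun l m p => μ (μ (a l) (b m)) (c p)) (l + (Nab : ℤ) - (s : ℤ)) (m + (s : ℤ)) p
        = ∑ s ∈ Finset.range (Nab + 1), ((-1 : ℤ) ^ s * ((Nab).choose s : ℤ)) •
            μ (μ (a (l + (Nab : ℤ) - (s : ℤ))) (b (m + (s : ℤ)))) (c p) := rfl
      _ = μ (∑ s ∈ Finset.range (Nab + 1), ((-1 : ℤ) ^ s * ((Nab).choose s : ℤ)) •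
            μ (a (l + (Nab : ℤ) - (s : ℤ))) (b (m + (s : ℤ)))) (c p) := pullL hadd1 _ _ _ _
      _ = μ 0 (c p) := by rw [hab l m]
      _ = 0 := mul_left_zero hadd1 _
  have hg13 : (((S (1,0,0) - S (0,0,1) : AddMonoid.End (ℤ → ℤ → ℤ → A))) ^ N) (fun l m p => μ (μ (a l) (b m)) (c p)) = 0 := by
    refine pow_apply_zero_of_le ?_ hNac
    funext l m p
    show (((S (1,0,0) - S (0,0,1) : AddMonoid.End (ℤ → ℤ → ℤ → A))) ^ Nac) (fun l m p => μ (μ (a l) (b m)) (c p)) l m p = (0 : A)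
    rw [d13_pow_apply]
    calc ∑ s ∈ Finset.range (Nac + 1), ((-1 : ℤ) ^ s * ((Nac).choose s : ℤ)) •
            (fun l m p => μ (μ (a l) (b m)) (c p)) (l + (Nac : ℤ) - (s : ℤ)) m (p + (s : ℤ))
        = ∑ s ∈ Finset.range (Nac + 1), ((-1 : ℤ) ^ s * ((Nac).choose s : ℤ)) •
            μ (μ (a (l + (Nac : ℤ) - (s : ℤ))) (b m)) (c (p + (s : ℤ))) := rfl
      _ = ∑ s ∈ Finset.range (Nac + 1), ((-1 : ℤ) ^ s * ((Nac).choose s : ℤ)) •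
            μ (μ (a (l + (Nac : ℤ) - (s : ℤ))) (c (p + (s : ℤ)))) (b m) :=
          Finset.sum_congr rfl (fun s _ => by rw [hrcom])
      _ = μ (∑ s ∈ Finset.range (Nac + 1), ((-1 : ℤ) ^ s * ((Nac).choose s : ℤ)) •
            μ (a (l + (Nac : ℤ) - (s : ℤ))) (c (p + (s : ℤ)))) (b m) := pullL hadd1 _ _ _ _
      _ = μ 0 (b m) := by rw [hac l p]
      _ = 0 := mul_left_zero hadd1 _
  -- operator facts for v1, v2, v3
  have hv1 : (((S (0,0,1) - S (0,1,0) : AddMonoid.End (ℤ → ℤ → ℤ → A))) ^ N) (fun l m p => μ (μ (c p) (a l)) (b m)) = 0 := by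
    refine pow_apply_zero_of_le ?_ hNcb
    funext l m p
    show (((S (0,0,1) - S (0,1,0) : AddMonoid.End (ℤ → ℤ → ℤ → A))) ^ Ncb) (fun l m p => μ (μ (c p) (a l)) (b m)) l m p = (0 : A)
    rw [e32_pow_apply]
    calc ∑ s ∈ Finset.range (Ncb + 1), ((-1 : ℤ) ^ s * ((Ncb).choose s : ℤ)) •
            (fun l m p => μ (μ (c p) (a l)) (b m)) l (m + (s : ℤ)) (p + (Ncb : ℤ) - (s : ℤ))
        = ∑ s ∈ Finset.range (Ncb + 1), ((-1 : ℤ) ^ s * ((Ncb).choose s : ℤ)) •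
            μ (μ (c (p + (Ncb : ℤ) - (s : ℤ))) (a l)) (b (m + (s : ℤ))) := rfl
      _ = ∑ s ∈ Finset.range (Ncb + 1), ((-1 : ℤ) ^ s * ((Ncb).choose s : ℤ)) •
            μ (μ (c (p + (Ncb : ℤ) - (s : ℤ))) (b (m + (s : ℤ)))) (a l) :=
          Finset.sum_congr rfl (fun s _ => by rw [hrcom])
      _ = μ (∑ s ∈ Finset.range (Ncb + 1), ((-1 : ℤ) ^ s * ((Ncb).choose s : ℤ)) •
            μ (c (p + (Ncb : ℤ) - (s : ℤ))) (b (m + (s : ℤ)))) (a l) := pullL hadd1 _ _ _ _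
      _ = μ 0 (a l) := by rw [hcb p m]
      _ = 0 := mul_left_zero hadd1 _
  have hv3 : (((S (0,0,1) - S (0,1,0) : AddMonoid.End (ℤ → ℤ → ℤ → A))) ^ N) (fun l m p => μ (a l) (μ (c p) (b m))) = 0 := by
    refine pow_apply_zero_of_le ?_ hNcb
    funext l m p
    show (((S (0,0,1) - S (0,1,0) : AddMonoid.End (ℤ → ℤ → ℤ → A))) ^ Ncb) (fun l m p => μ (a l) (μ (c p) (b m))) l m p = (0 : A)
    rw [e32_pow_apply]
    calc ∑ s ∈ Finset.range (Ncb + 1), ((-1 : ℤ) ^ s * ((Ncb).choose s : ℤ)) •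
            (fun l m p => μ (a l) (μ (c p) (b m))) l (m + (s : ℤ)) (p + (Ncb : ℤ) - (s : ℤ))
        = ∑ s ∈ Finset.range (Ncb + 1), ((-1 : ℤ) ^ s * ((Ncb).choose s : ℤ)) •
            μ (a l) (μ (c (p + (Ncb : ℤ) - (s : ℤ))) (b (m + (s : ℤ)))) := rfl
      _ = μ (a l) (∑ s ∈ Finset.range (Ncb + 1), ((-1 : ℤ) ^ s * ((Ncb).choose s : ℤ)) •
            μ (c (p + (Ncb : ℤ) - (s : ℤ))) (b (m + (s : ℤ)))) := pullR hadd2 _ _ _ _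
      _ = μ (a l) 0 := by rw [hcb p m]
      _ = 0 := mul_right_zero hadd2 _
  have hv2a : (((S (1,0,0) - S (0,0,1) : AddMonoid.End (ℤ → ℤ → ℤ → A))) ^ N) (fun l m p => μ (μ (a l) (c p)) (b m)) = 0 := by
    refine pow_apply_zero_of_le ?_ hNac
    funext l m p
    show (((S (1,0,0) - S (0,0,1) : AddMonoid.End (ℤ → ℤ → ℤ → A))) ^ Nac) (fun l m p => μ (μ (a l) (c p)) (b m)) l m p = (0 : A)
    rw [d13_pow_apply]
    calc ∑ s ∈ Finset.range (Nac + 1), ((-1 : ℤ) ^ s * ((Nac).choose s : ℤ)) •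
            (fun l m p => μ (μ (a l) (c p)) (b m)) (l + (Nac : ℤ) - (s : ℤ)) m (p + (s : ℤ))
        = ∑ s ∈ Finset.range (Nac + 1), ((-1 : ℤ) ^ s * ((Nac).choose s : ℤ)) •
            μ (μ (a (l + (Nac : ℤ) - (s : ℤ))) (c (p + (s : ℤ)))) (b m) := rfl
      _ = μ (∑ s ∈ Finset.range (Nac + 1), ((-1 : ℤ) ^ s * ((Nac).choose s : ℤ)) •
            μ (a (l + (Nac : ℤ) - (s : ℤ))) (c (p + (s : ℤ)))) (b m) := pullL hadd1 _ _ _ _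
      _ = μ 0 (b m) := by rw [hac l p]
      _ = 0 := mul_left_zero hadd1 _
  have hv2b : (((S (1,0,0) - S (0,1,0) : AddMonoid.End (ℤ → ℤ → ℤ → A))) ^ N) (fun l m p => μ (μ (a l) (c p)) (b m)) = 0 := by
    refine pow_apply_zero_of_le ?_ hNab
    funext l m p
    show (((S (1,0,0) - S (0,1,0) : AddMonoid.End (ℤ → ℤ → ℤ → A))) ^ Nab) (fun l m p => μ (μ (a l) (c p)) (b m)) l m p = (0 : A)
    rw [d12_pow_apply]
    calc ∑ s ∈ Finset.range (Nab + 1), ((-1 : ℤ) ^ s * ((Nab).choose s : ℤ)) •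
            (fun l m p => μ (μ (a l) (c p)) (b m)) (l + (Nab : ℤ) - (s : ℤ)) (m + (s : ℤ)) p
        = ∑ s ∈ Finset.range (Nab + 1), ((-1 : ℤ) ^ s * ((Nab).choose s : ℤ)) •
            μ (μ (a (l + (Nab : ℤ) - (s : ℤ))) (c p)) (b (m + (s : ℤ))) := rfl
      _ = ∑ s ∈ Finset.range (Nab + 1), ((-1 : ℤ) ^ s * ((Nab).choose s : ℤ)) •
            μ (μ (a (l + (Nab : ℤ) - (s : ℤ))) (b (m + (s : ℤ)))) (c p) :=
          Finset.sum_congr rfl (fun s _ => by rw [hrcom])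
      _ = μ (∑ s ∈ Finset.range (Nab + 1), ((-1 : ℤ) ^ s * ((Nab).choose s : ℤ)) •
            μ (a (l + (Nab : ℤ) - (s : ℤ))) (b (m + (s : ℤ)))) (c p) := pullL hadd1 _ _ _ _
      _ = μ 0 (c p) := by rw [hab l m]
      _ = 0 := mul_left_zero hadd1 _
  constructor
  · refine ⟨2 * N, fun m p => ?_⟩
    have hNP : ∀ r q : ℤ, μ (NthProduct μ n a b r) (c q) = ((((S (1,0,0) - S (0,1,0) : AddMonoid.End (ℤ → ℤ → ℤ → A))) ^ n) (fun l m p => μ (μ (a l) (b m)) (c p))) 0 r q := by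
      intro r q
      rw [d12_pow_apply]
      calc μ (NthProduct μ n a b r) (c q)
          = μ (∑ j ∈ Finset.range (n + 1), ((-1 : ℤ) ^ j * ((n).choose j : ℤ)) •
              μ (a ((n : ℤ) - (j : ℤ))) (b (r + (j : ℤ)))) (c q) := rfl
        _ = ∑ j ∈ Finset.range (n + 1), ((-1 : ℤ) ^ j * ((n).choose j : ℤ)) •
              μ (μ (a ((n : ℤ) - (j : ℤ))) (b (r + (j : ℤ)))) (c q) := (pullL hadd1 _ _ _ _).symm
        _ = ∑ j ∈ Finset.range (n + 1), ((-1 : ℤ) ^ j * ((n).choose j : ℤ)) •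
              (fun l m p => μ (μ (a l) (b m)) (c p)) (0 + (n : ℤ) - (j : ℤ)) (r + (j : ℤ)) q := by
            refine Finset.sum_congr rfl fun j _ => ?_
            rw [zero_add]
    calc ∑ s ∈ Finset.range (2 * N + 1), ((-1 : ℤ) ^ s * ((2 * N).choose s : ℤ)) •
            μ (NthProduct μ n a b (m + ((2 * N : ℕ) : ℤ) - (s : ℤ))) (c (p + (s : ℤ)))
        = ∑ s ∈ Finset.range (2 * N + 1), ((-1 : ℤ) ^ s * ((2 * N).choose s : ℤ)) •
            ((((S (1,0,0) - S (0,1,0) : AddMonoid.End (ℤ → ℤ → ℤ → A))) ^ n) (fun l m p => μ (μ (a l) (b m)) (c p))) 0 (m + ((2 * N : ℕ) : ℤ) - (s : ℤ)) (p + (s : ℤ)) :=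
          Finset.sum_congr rfl (fun s _ => by rw [hNP])
      _ = ((((S (0,1,0) - S (0,0,1) : AddMonoid.End (ℤ → ℤ → ℤ → A))) ^ (2 * N)) ((((S (1,0,0) - S (0,1,0) : AddMonoid.End (ℤ → ℤ → ℤ → A))) ^ n) (fun l m p => μ (μ (a l) (b m)) (c p)))) 0 m p :=
          (d23_pow_apply (2 * N) _ 0 m p).symm
      _ = ((((S (0,1,0) - S (0,0,1) : AddMonoid.End (ℤ → ℤ → ℤ → A))) ^ (2 * N) * ((S (1,0,0) - S (0,1,0) : AddMonoid.End (ℤ → ℤ → ℤ → A))) ^ n) (fun l m p => μ (μ (a l) (b m)) (c p))) 0 m p := rfl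
      _ = 0 := by
          have hc : Commute ((S (1,0,0) - S (0,1,0) : AddMonoid.End (ℤ → ℤ → ℤ → A))) ((S (1,0,0) - S (0,0,1) : AddMonoid.End (ℤ → ℤ → ℤ → A))) := Dsub_comm _ _ _ _
          have hrwD : ((S (0,1,0) - S (0,0,1) : AddMonoid.End (ℤ → ℤ → ℤ → A))) = ((S (1,0,0) - S (0,0,1) : AddMonoid.End (ℤ → ℤ → ℤ → A))) - ((S (1,0,0) - S (0,1,0) : AddMonoid.End (ℤ → ℤ → ℤ → A))) := by abel
          rw [hrwD, compA hc hg12 hg13]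
          rfl
  · refine ⟨2 * N, fun m p => ?_⟩
    have hNP2 : ∀ r q : ℤ, μ (c q) (NthProduct μ n a b r) = ((((S (1,0,0) - S (0,1,0) : AddMonoid.End (ℤ → ℤ → ℤ → A))) ^ n) (fun l m p => μ (c p) (μ (a l) (b m)))) 0 r q := by
      intro r q
      rw [d12_pow_apply]
      calc μ (c q) (NthProduct μ n a b r)
          = μ (c q) (∑ j ∈ Finset.range (n + 1), ((-1 : ℤ) ^ j * ((n).choose j : ℤ)) •
              μ (a ((n : ℤ) - (j : ℤ))) (b (r + (j : ℤ)))) := rfl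
        _ = ∑ j ∈ Finset.range (n + 1), ((-1 : ℤ) ^ j * ((n).choose j : ℤ)) •
              μ (c q) (μ (a ((n : ℤ) - (j : ℤ))) (b (r + (j : ℤ)))) := (pullR hadd2 _ _ _ _).symm
        _ = ∑ j ∈ Finset.range (n + 1), ((-1 : ℤ) ^ j * ((n).choose j : ℤ)) •
              (fun l m p => μ (c p) (μ (a l) (b m))) (0 + (n : ℤ) - (j : ℤ)) (r + (j : ℤ)) q := by
            refine Finset.sum_congr rfl fun j _ => ?_
            rw [zero_add]
    have hsplit : (fun l m p => μ (c p) (μ (a l) (b m))) = (fun l m p => μ (μ (c p) (a l)) (b m)) - (fun l m p => μ (μ (a l) (c p)) (b m)) + (fun l m p => μ (a l) (μ (c p) (b m))) := by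
      funext l m p
      show μ (c p) (μ (a l) (b m)) =
        μ (μ (c p) (a l)) (b m) - μ (μ (a l) (c p)) (b m) + μ (a l) (μ (c p) (b m))
      have h := hlsym (c p) (a l) (b m)
      have h2 : μ (c p) (μ (a l) (b m)) =
          μ (μ (c p) (a l)) (b m) - (μ (μ (a l) (c p)) (b m) - μ (a l) (μ (c p) (b m))) := by
        rw [← h]; abel
      rw [h2]; abel
    have hbig : ((((S (0,0,1) - S (0,1,0) : AddMonoid.End (ℤ → ℤ → ℤ → A))) ^ (2 * N) * ((S (1,0,0) - S (0,1,0) : AddMonoid.End (ℤ → ℤ → ℤ → A))) ^ n)) (fun l m p => μ (c p) (μ (a l) (b m))) = 0 := by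
      rw [hsplit, map_add, map_sub]
      have hcED : Commute ((S (0,0,1) - S (0,1,0) : AddMonoid.End (ℤ → ℤ → ℤ → A))) ((S (1,0,0) - S (0,1,0) : AddMonoid.End (ℤ → ℤ → ℤ → A))) := Dsub_comm _ _ _ _
      have t1 : ((((S (0,0,1) - S (0,1,0) : AddMonoid.End (ℤ → ℤ → ℤ → A))) ^ (2 * N) * ((S (1,0,0) - S (0,1,0) : AddMonoid.End (ℤ → ℤ → ℤ → A))) ^ n)) (fun l m p => μ (μ (c p) (a l)) (b m)) = 0 := compB hcED hv1
      have t3 : ((((S (0,0,1) - S (0,1,0) : AddMonoid.End (ℤ → ℤ → ℤ → A))) ^ (2 * N) * ((S (1,0,0) - S (0,1,0) : AddMonoid.End (ℤ → ℤ → ℤ → A))) ^ n)) (fun l m p => μ (a l) (μ (c p) (b m))) = 0 := compB hcED hv3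
      have t2 : ((((S (0,0,1) - S (0,1,0) : AddMonoid.End (ℤ → ℤ → ℤ → A))) ^ (2 * N) * ((S (1,0,0) - S (0,1,0) : AddMonoid.End (ℤ → ℤ → ℤ → A))) ^ n)) (fun l m p => μ (μ (a l) (c p)) (b m)) = 0 := by
        have hcE31 : Commute ((S (0,0,1) - S (0,1,0) : AddMonoid.End (ℤ → ℤ → ℤ → A))) ((S (0,0,1) - S (1,0,0) : AddMonoid.End (ℤ → ℤ → ℤ → A))) := Dsub_comm _ _ _ _
        have hESD : ((S (0,0,1) - S (0,1,0) : AddMonoid.End (ℤ → ℤ → ℤ → A))) - ((S (0,0,1) - S (1,0,0) : AddMonoid.End (ℤ → ℤ → ℤ → A))) = ((S (1,0,0) - S (0,1,0) : AddMonoid.End (ℤ → ℤ → ℤ → A))) := by abel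
        have hxy : ((((S (0,0,1) - S (0,1,0) : AddMonoid.End (ℤ → ℤ → ℤ → A))) - ((S (0,0,1) - S (1,0,0) : AddMonoid.End (ℤ → ℤ → ℤ → A)))) ^ N) (fun l m p => μ (μ (a l) (c p)) (b m)) = 0 := by rw [hESD]; exact hv2b
        have hyv : (((S (0,0,1) - S (1,0,0) : AddMonoid.End (ℤ → ℤ → ℤ → A))) ^ N) (fun l m p => μ (μ (a l) (c p)) (b m)) = 0 := by
          have hD31 : ((S (0,0,1) - S (1,0,0) : AddMonoid.End (ℤ → ℤ → ℤ → A))) = -((S (1,0,0) - S (0,0,1) : AddMonoid.End (ℤ → ℤ → ℤ → A))) := by abel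
          rw [hD31]; exact neg_pow_apply_zero hv2a
        have hres := compC (n := n) hcE31 hxy hyv
        rw [hESD] at hres
        exact hres
      rw [t1, t2, t3]
      simp
    calc ∑ s ∈ Finset.range (2 * N + 1), ((-1 : ℤ) ^ s * ((2 * N).choose s : ℤ)) •
            μ (c (m + ((2 * N : ℕ) : ℤ) - (s : ℤ))) (NthProduct μ n a b (p + (s : ℤ)))
        = ∑ s ∈ Finset.range (2 * N + 1), ((-1 : ℤ) ^ s * ((2 * N).choose s : ℤ)) •
            ((((S (1,0,0) - S (0,1,0) : AddMonoid.End (ℤ → ℤ → ℤ → A))) ^ n) (fun l m p => μ (c p) (μ (a l) (b m)))) 0 (p + (s : ℤ)) (m + ((2 * N : ℕ) : ℤ) - (s : ℤ)) :=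
          Finset.sum_congr rfl (fun s _ => by rw [hNP2])
      _ = ((((S (0,0,1) - S (0,1,0) : AddMonoid.End (ℤ → ℤ → ℤ → A))) ^ (2 * N)) ((((S (1,0,0) - S (0,1,0) : AddMonoid.End (ℤ → ℤ → ℤ → A))) ^ n) (fun l m p => μ (c p) (μ (a l) (b m))))) 0 p m :=
          (e32_pow_apply (2 * N) _ 0 p m).symm
      _ = ((((S (0,0,1) - S (0,1,0) : AddMonoid.End (ℤ → ℤ → ℤ → A))) ^ (2 * N) * ((S (1,0,0) - S (0,1,0) : AddMonoid.End (ℤ → ℤ → ℤ → A))) ^ n) (fun l m p => μ (c p) (μ (a l) (b m)))) 0 p m := rfl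
      _ = 0 := by rw [hbig]; rfl

end NovikovDongAux

/-- Novikov algebras satisfy the Dong property. -/
theorem novikov_dong_property (k : Type*) [Field k] [CharZero k]
    (A : Type*) [AddCommGroup A] [Module k A]
    (μ : A → A → A) (hbil : IsBilinear k μ)
    (hlsym : ∀ x y z : A, μ (μ x y) z - μ x (μ y z) = μ (μ y x) z - μ y (μ x z))
    (hrcom : ∀ x y z : A, μ (μ x y) z = μ (μ x z) y)
    (a b c : ℤ → A) (hloc : PairwiseMutuallyLocal μ a b c) (n : ℕ) :
    IsLocalPair μ (NthProduct μ n a b) c ∧ IsLocalPair μ c (NthProduct μ n a b) := by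
  obtain ⟨Nab, hab⟩ := hloc.1
  obtain ⟨Nac, hac⟩ := hloc.2.2.1
  obtain ⟨Ncb, hcb⟩ := hloc.2.2.2.2.2
  exact NovikovDongAux.main_aux μ hbil.1 hbil.2.1 hlsym hrcom a b c Nab Nac Ncb hab hac hcb n
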